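/- If the Hahn series ring R((Γ)) over a linearly ordered abelian group Γ is a Σ_{U((Γ))}-zip ring, then R is a Σ_U-zip ring, where U is an ideal of R and U((Γ)) consists of Hahn series with all coefficients in U. -/

import Mathlib

/-- The quotient `(U : X) = {r | x·r ∈ U for all x ∈ X}`. -/
def setQuot {S : Type*} [Ring S] (U X : Set S) : Set S :=
  {r : S | ∀ x ∈ X, x * r ∈ U}

/-- `S` is `Σ_U`-zip: for any subset `X ⊄ U` with `(U : X) = U` there is a
finite subset `Y ⊆ X` with `(U : Y) = U`. -/
def IsSigmaZip (S : Type*) [Ring S] (U : Set S) : Prop :=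
  ∀ X : Set S, ¬ X ⊆ U → setQuot U X = U →
    ∃ Y : Finset S, ↑Y ⊆ X ∧ setQuot U (↑Y : Set S) = U

/-- A two-sided ideal (as a subset). -/
def IsTwoSidedIdeal {S : Type*} [Ring S] (I : Set S) : Prop :=
  0 ∈ I ∧ (∀ a ∈ I, ∀ b ∈ I, a + b ∈ I) ∧ (∀ a ∈ I, -a ∈ I) ∧
    (∀ a ∈ I, ∀ r : S, a * r ∈ I) ∧ ∀ a ∈ I, ∀ r : S, r * a ∈ I

/-- `U((Γ))`: Hahn series with all coefficients in `U`. -/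
def hahnSeriesOver {R : Type*} [Ring R] (Γ : Type*) [AddCommGroup Γ] [LinearOrder Γ]
    [IsOrderedAddMonoid Γ] (U : Set R) : Set (HahnSeries Γ R) :=
  {f | ∀ γ : Γ, f.coeff γ ∈ U}

/-- If the Hahn series ring `R((Γ))` is `Σ_{U((Γ))}`-zip, then `R` is `Σ_U`-zip. -/
theorem sigmaZip_of_sigmaZip_hahnSeries {R : Type*} [Ring R] (Γ : Type*)
    [AddCommGroup Γ] [LinearOrder Γ] [IsOrderedAddMonoid Γ] (U : Set R) (hIdeal : IsTwoSidedIdeal U)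
    (hZip : IsSigmaZip (HahnSeries Γ R) (hahnSeriesOver Γ U)) :
    IsSigmaZip R U := by
  intro X hX hQuot
  set X' : Set (HahnSeries Γ R) := HahnSeries.single (0 : Γ) '' X with hX'
  have hX'not : ¬ X' ⊆ hahnSeriesOver Γ U := by
    intro h
    apply hX
    intro x hx
    have := h ⟨x, hx, rfl⟩ 0
    simpa using this
  have hQuot' : setQuot (hahnSeriesOver Γ U) X' = hahnSeriesOver Γ U := by
    ext f
    constructor
    · intro hf γ
      obtain ⟨x, hx, hxn⟩ := Set.not_subset.mp hX
      -- f.coeff γ ∈ setQuot U X = U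
      have key : f.coeff γ ∈ setQuot U X := by
        intro y hy
        have := hf (HahnSeries.single 0 y) ⟨y, hy, rfl⟩ γ
        rwa [HahnSeries.coeff_single_zero_mul] at this
      rw [hQuot] at key
      exact key
    · intro hf g hg γ
      obtain ⟨x, hx, rfl⟩ := hg
      rw [HahnSeries.coeff_single_zero_mul]
      exact hIdeal.2.2.2.2 (f.coeff γ) (hf γ) x
  classical
  obtain ⟨Y', hY'sub, hY'quot⟩ := hZip X' hX'not hQuot'
  refine ⟨Y'.image (fun f => f.coeff 0), ?_, ?_⟩
  · intro y hy
    simp only [Finset.coe_image, Set.mem_image, Finset.mem_coe] at hy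
    obtain ⟨f, hf, rfl⟩ := hy
    obtain ⟨x, hx, rfl⟩ := hY'sub hf
    simpa using hx
  · ext r
    constructor
    · intro hr
      have : HahnSeries.single (0 : Γ) r ∈ setQuot (hahnSeriesOver Γ U) (↑Y' : Set (HahnSeries Γ R)) := by
        intro f hf γ
        obtain ⟨x, hx, rfl⟩ := hY'sub hf
        rw [HahnSeries.single_mul_single]
        have hxr : x * r ∈ U := by
          have := hr (x) (by
            simp only [Finset.coe_image, Set.mem_image, Finset.mem_coe]
            exact ⟨_, hf, by simp⟩)
          exact this
        by_cases hγ : γ = 0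
        · subst hγ; simpa using hxr
        · rw [HahnSeries.coeff_single_of_ne (by simpa using hγ)]
          exact hIdeal.1
      rw [hY'quot] at this
      have := this 0
      simpa using this
    · intro hr x hx
      simp only [Finset.coe_image, Set.mem_image, Finset.mem_coe] at hx
      obtain ⟨f, hf, rfl⟩ := hx
      obtain ⟨x, hx, rfl⟩ := hY'sub hf
      simp only [HahnSeries.coeff_single_same]
      have : x ∈ X := hx
      have : r ∈ setQuot U X := by rw [hQuot]; exact hr
      exact this x hx
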